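/- Assume the factorization is semidirect in the sense that s◁u = s for all s ∈ M, u ∈ G (equivalently su = (s▷u)s, so G is normal in X). Then the map sending an M-conjugacy class C^M to the X-conjugacy class ∪_{u∈G}(u⁻¹ C^M u) is injective from the set of conjugacy classes of M to the set of conjugacy classes of X contained in Z; equivalently, any two elements of M that are conjugate in X are already conjugate in M. -/

import Mathlib

/-- **Injectivity of `C^M ↦ C^X` in the semidirect case.**
If `s◁u = s` for all `s ∈ M`, `u ∈ G` (so `su = (s▷u)s` and `G` is normal in `X`),
then the map `C^M ↦ ∪_{u∈G} u⁻¹ C^M u` from conjugacy classes of `M` to conjugacy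
classes of `X` contained in `Z` is injective; equivalently, any two elements of
`M` conjugate in `X` are already conjugate in `M`. -/
theorem conj_class_map_injective_semidirect
    {X : Type*} [Group X] [Fintype X] (G M : Subgroup X)
    (hbij : Function.Bijective (fun p : ↥G × ↥M => (p.1 : X) * (p.2 : X)))
    (rho : ↥M → ↥G → ↥G) (sig : ↥M → ↥G → ↥M)
    (hfact : ∀ (s : ↥M) (u : ↥G), (s : X) * (u : X) = (rho s u : X) * (sig s u : X))
    (hsemi : ∀ (s : ↥M) (u : ↥G), sig s u = s) :
    (∀ s t : ↥M,
      (⋃ u ∈ (G : Set X), (fun x => u⁻¹ * x * u) ''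
        ((fun m => m⁻¹ * (s : X) * m) '' (M : Set X))) =
      (⋃ u ∈ (G : Set X), (fun x => u⁻¹ * x * u) ''
        ((fun m => m⁻¹ * (t : X) * m) '' (M : Set X))) →
      IsConj s t) ∧
    (∀ s t : ↥M, IsConj (s : X) (t : X) → IsConj s t) := by
  set e := Equiv.ofBijective _ hbij with he
  have key : ∀ (w : ↥G) (k : ↥M), e.symm ((w : X) * k) = (w, k) := fun w k =>
    e.symm_apply_apply (w, k)
  set π : X → ↥M := fun x => (e.symm x).2 with hπ
  have hx : ∀ x : X, ((e.symm x).1 : X) * ((e.symm x).2 : X) = x := fun x =>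
    Equiv.ofBijective_apply_symm_apply _ hbij x
  have hπM : ∀ m : ↥M, π (m : X) = m := by
    intro m
    have h := key 1 m
    simp only [OneMemClass.coe_one, one_mul] at h
    simp [hπ, h]
  -- m * v = rho m v * m
  have hcomm : ∀ (m : ↥M) (v : ↥G), (m : X) * v = (rho m v : X) * m := by
    intro m v
    rw [hfact m v, hsemi m v]
  have hπmul : ∀ x y : X, π (x * y) = π x * π y := by
    intro x y
    set u := (e.symm x).1 with hu
    set m := (e.symm x).2 with hm
    set v := (e.symm y).1 with hv
    set n := (e.symm y).2 with hn
    have hxy : x * y = ((u * rho m v : ↥G) : X) * ((m * n : ↥M) : X) := by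
      push_cast
      rw [← hx x, ← hx y, ← hu, ← hm, ← hv, ← hn]
      rw [mul_assoc (u : X), ← mul_assoc (m : X), hcomm m v]
      group
    rw [hπ]
    simp only [hxy, key]
    rfl
  have part2 : ∀ s t : ↥M, IsConj (s : X) (t : X) → IsConj s t := by
    intro s t h
    obtain ⟨c, hc⟩ := isConj_iff.mp h
    refine isConj_iff.mpr ⟨π c, ?_⟩
    have : π (c * (s : X) * c⁻¹) = π c * s * (π c)⁻¹ := by
      rw [hπmul, hπmul, hπM]
      congr 1
      have h1 : π c * π (c⁻¹) = 1 := by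
        rw [← hπmul, mul_inv_cancel]
        simpa using hπM 1
      exact (inv_eq_of_mul_eq_one_right h1).symm
    rw [hc, hπM] at this
    exact this.symm
  refine ⟨?_, part2⟩
  intro s t hset
  have hs : (s : X) ∈ (⋃ u ∈ (G : Set X), (fun x => u⁻¹ * x * u) ''
      ((fun m => m⁻¹ * (s : X) * m) '' (M : Set X))) := by
    refine Set.mem_biUnion (G.one_mem) ?_
    refine ⟨(s : X), ⟨1, M.one_mem, by simp⟩, by simp⟩
  rw [hset] at hs
  simp only [Set.mem_iUnion, Set.mem_image, SetLike.mem_coe, exists_prop] at hs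
  obtain ⟨u, hu, y, ⟨m, hmM, rfl⟩, hy⟩ := hs
  have : IsConj (t : X) (s : X) :=
    isConj_iff.mpr ⟨(m * u)⁻¹, by rw [← hy]; group⟩
  exact (part2 t s this).symm
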